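/- Let n ≥ 1 and let B be a lattice polyhedron in ℝ^n. Then the relative mixed volume of n copies of B equals the lattice volume of C \ B; that is, MV(B, …, B) = n! · vol(C \ B), where vol is Lebesgue measure. -/
import Mathlib


open Pointwise MeasureTheory

noncomputable section

/-- The positive (closed) orthant in `ℝ^n`. -/
def orthant (n : ℕ) : Set (Fin n → ℝ) := {x | ∀ i, 0 ≤ x i}

/-- The standard basis vector `e m`. -/
def stdVec {n : ℕ} (m : Fin n) : Fin n → ℝ := Pi.single m 1

/-- A lattice polyhedron: the Minkowski sum of the convex hull of a finite nonempty set of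
points with nonnegative integer coordinates and the positive orthant. -/
def IsLatticePolyhedron {n : ℕ} (B : Set (Fin n → ℝ)) : Prop :=
  ∃ F : Finset (Fin n → ℝ), F.Nonempty ∧
    (∀ p ∈ F, ∀ i, ∃ m : ℕ, p i = (m : ℝ)) ∧
    B = convexHull ℝ (↑F) + orthant n

/-- The relative mixed volume of the pairs `(C, B 1), …, (C, B n)`. -/
def MV {n : ℕ} (B : Fin n → Set (Fin n → ℝ)) : ℝ :=
  ∑ I ∈ Finset.univ.powerset.filter (fun I : Finset (Fin n) => I.Nonempty),
    (-1 : ℝ) ^ (n - I.card) * (volume (orthant n \ ∑ i ∈ I, B i)).toReal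

/-- The polyhedron `C_{a_1,…,a_n} = conv({a_1 e_1, …, a_n e_n}) + C`. -/
def Caf {n : ℕ} (a : Fin n → ℝ) : Set (Fin n → ℝ) :=
  convexHull ℝ (Set.range fun i : Fin n => Pi.single i (a i)) + orthant n

/-- A tuple of polyhedra is minimal with mixed volume `V`. -/
def IsMinimalTuple {n : ℕ} (B : Fin n → Set (Fin n → ℝ)) (V : ℝ) : Prop :=
  MV B = V ∧ ∀ i : Fin n, ∀ δ : Fin n → ℝ,
    (∀ j, ∃ m : ℤ, δ j = (m : ℝ)) → δ ∈ orthant n → δ ∉ B i →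
    MV (Function.update B i (convexHull ℝ (B i ∪ {δ}))) < V

/-! ### Auxiliary combinatorial identity -/

/-- The alternating sum `∑ₖ (-1)^(n-k) C(n,k) k^m`. -/
def Sal (n m : ℕ) : ℝ :=
  ∑ k ∈ Finset.range (n+1), (-1:ℝ)^(n-k) * (n.choose k : ℝ) * (k:ℝ)^m

lemma neg_one_pow_sub {n k : ℕ} (hk : k ≤ n) : ((-1:ℝ))^(n-k) = (-1)^n * (-1)^k := by
  have h1 : ((-1:ℝ))^(n-k) * (-1)^k = (-1)^n := by
    rw [← pow_add, Nat.sub_add_cancel hk]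
  have h2 : ((-1:ℝ))^k * (-1)^k = 1 := by
    rw [← pow_add]; exact Even.neg_one_pow ⟨k, rfl⟩
  calc ((-1:ℝ))^(n-k) = (-1)^(n-k) * ((-1)^k * (-1)^k) := by rw [h2, mul_one]
    _ = ((-1)^(n-k) * (-1)^k) * (-1)^k := by ring
    _ = (-1)^n * (-1)^k := by rw [h1]

lemma Sal_zero {n : ℕ} (hn : 1 ≤ n) : Sal n 0 = 0 := by
  have hb := add_pow (-1:ℝ) 1 n
  rw [neg_add_cancel, zero_pow (by omega)] at hb
  simp only [one_pow, mul_one] at hb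
  unfold Sal
  have : ∑ k ∈ Finset.range (n+1), (-1:ℝ)^(n-k) * (n.choose k : ℝ) * (k:ℝ)^0
      = (-1:ℝ)^n * ∑ k ∈ Finset.range (n+1), (-1:ℝ)^k * (n.choose k : ℝ) := by
    rw [Finset.mul_sum]
    refine Finset.sum_congr rfl fun k hk => ?_
    rw [neg_one_pow_sub (Nat.lt_succ_iff.mp (Finset.mem_range.mp hk))]
    ring
  rw [this, ← hb, mul_zero]

lemma Sal_rec (N M : ℕ) :
    Sal (N+1) (M+1) = (N+1) * ∑ t ∈ Finset.range (M+1), (M.choose t : ℝ) * Sal N t := by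
  unfold Sal
  rw [Finset.sum_range_succ']
  simp only [Nat.cast_zero, zero_pow (Nat.succ_ne_zero M), mul_zero, add_zero]
  have key : ∀ j ∈ Finset.range (N+1),
      (-1:ℝ)^(N+1-(j+1)) * ((N+1).choose (j+1) : ℝ) * (((j+1 : ℕ)):ℝ)^(M+1)
      = (N+1) * ∑ t ∈ Finset.range (M+1),
          (M.choose t : ℝ) * ((-1:ℝ)^(N-j) * (N.choose j : ℝ) * (j:ℝ)^t) := by
    intro j hj
    have hc : ((N+1) * N.choose j : ℝ) = ((N+1).choose (j+1) : ℝ) * (j+1) := by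
      exact_mod_cast congrArg (Nat.cast (R := ℝ)) (Nat.add_one_mul_choose_eq N j)
    have hbin : ((j:ℝ)+1)^M = ∑ t ∈ Finset.range (M+1), (j:ℝ)^t * (M.choose t : ℝ) := by
      have := add_pow (j:ℝ) 1 M
      simpa using this
    have hstep : (N+1-(j+1)) = N - j := by omega
    push_cast
    rw [pow_succ ((j:ℝ)+1), hbin, Finset.sum_mul, Finset.mul_sum, Finset.mul_sum]
    refine Finset.sum_congr rfl fun t ht => ?_
    linear_combination (-(-1:ℝ)^(N-j) * (M.choose t : ℝ) * (j:ℝ)^t) * hc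
  rw [Finset.sum_congr rfl key, ← Finset.mul_sum]
  congr 1
  rw [Finset.sum_comm]
  refine Finset.sum_congr rfl fun t ht => ?_
  rw [Finset.mul_sum]

lemma Sal_main : ∀ n : ℕ, (∀ m, m < n → Sal n m = 0) ∧ Sal n n = (n.factorial : ℝ) := by
  intro n
  induction n with
  | zero =>
    constructor
    · intro m hm; omega
    · unfold Sal; simp
  | succ N ih =>
    have hzero : ∀ m, m < N + 1 → Sal (N+1) m = 0 := by
      intro m hm
      match m with
      | 0 => exact Sal_zero (by omega)
      | (M+1) =>
        rw [Sal_rec]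
        have : ∑ t ∈ Finset.range (M+1), (M.choose t : ℝ) * Sal N t = 0 := by
          refine Finset.sum_eq_zero fun t ht => ?_
          rw [ih.1 t (by have := Finset.mem_range.mp ht; omega), mul_zero]
        rw [this, mul_zero]
    refine ⟨hzero, ?_⟩
    rw [Sal_rec, Finset.sum_range_succ]
    have h1 : ∑ t ∈ Finset.range N, (N.choose t : ℝ) * Sal N t = 0 := by
      refine Finset.sum_eq_zero fun t ht => ?_
      rw [ih.1 t (Finset.mem_range.mp ht), mul_zero]
    rw [h1, zero_add, Nat.choose_self, ih.2]
    push_cast [Nat.factorial_succ]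
    ring

/-! ### Auxiliary geometric lemmas -/

lemma convex_orthant (n : ℕ) : Convex ℝ (orthant n) := by
  intro x hx y hy a b ha hb hab i
  simp only [Pi.add_apply, Pi.smul_apply, smul_eq_mul]
  exact add_nonneg (mul_nonneg ha (hx i)) (mul_nonneg hb (hy i))

lemma smul_orthant {n : ℕ} {c : ℝ} (hc : 0 < c) : c • orthant n = orthant n := by
  ext x
  rw [Set.mem_smul_set_iff_inv_smul_mem₀ hc.ne']
  simp only [orthant, Set.mem_setOf_eq, Pi.smul_apply, smul_eq_mul]
  refine forall_congr' fun i => ?_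
  rw [mul_nonneg_iff_of_pos_left (inv_pos.mpr hc)]

lemma sum_const_convex {n : ℕ} {B : Set (Fin n → ℝ)} (hB : Convex ℝ B)
    {I : Finset (Fin n)} (hI : I.Nonempty) : ∑ _i ∈ I, B = ((I.card : ℝ)) • B := by
  induction hI using Finset.Nonempty.cons_induction with
  | singleton a => simp
  | cons a s ha hs ih =>
      rw [Finset.sum_cons, ih, Finset.card_cons]
      push_cast
      have h1 : ((s.card : ℝ) + 1) = 1 + (s.card : ℝ) := by ring
      rw [h1, hB.add_smul zero_le_one (Nat.cast_nonneg _), one_smul]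

theorem stmt_17 {n : ℕ} (hn : 1 ≤ n) (B : Set (Fin n → ℝ))
    (hB : IsLatticePolyhedron B) :
    MV (fun _ : Fin n => B) = (n.factorial : ℝ) * (volume (orthant n \ B)).toReal := by
  obtain ⟨F, hF, -, hBeq⟩ := hB
  have hconv : Convex ℝ B := hBeq ▸ ((convex_convexHull ℝ _).add (convex_orthant n))
  set v := (volume (orthant n \ B)).toReal with hv
  have hterm : ∀ I ∈ Finset.univ.powerset.filter (fun I : Finset (Fin n) => I.Nonempty),
      (-1 : ℝ) ^ (n - I.card) * (volume (orthant n \ ∑ i ∈ I, (fun _ : Fin n => B) i)).toReal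
      = (-1:ℝ)^(n - I.card) * (I.card:ℝ)^n * v := by
    intro I hI
    have hIne : I.Nonempty := (Finset.mem_filter.mp hI).2
    have hcpos : (0:ℝ) < I.card := by
      exact_mod_cast Finset.card_pos.mpr hIne
    have hsum : (∑ i ∈ I, (fun _ : Fin n => B) i) = ((I.card : ℝ)) • B :=
      sum_const_convex hconv hIne
    have hset : orthant n \ ((I.card:ℝ)) • B = ((I.card:ℝ)) • (orthant n \ B) := by
      rw [Set.smul_set_sdiff₀ hcpos.ne', smul_orthant hcpos]
    rw [hsum, hset, Measure.addHaar_smul_of_nonneg volume hcpos.le,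
      Module.finrank_fin_fun, ENNReal.toReal_mul, ENNReal.toReal_ofReal (by positivity)]
    ring
  have hS : ∑ I ∈ Finset.univ.powerset.filter (fun I : Finset (Fin n) => I.Nonempty),
      (-1:ℝ)^(n - I.card) * (I.card:ℝ)^n = (n.factorial : ℝ) := by
    have hfull : ∑ I ∈ (Finset.univ : Finset (Fin n)).powerset,
        (-1:ℝ)^(n - I.card) * (I.card:ℝ)^n = (n.factorial : ℝ) := by
      rw [Finset.sum_powerset_apply_card (fun m => (-1:ℝ)^(n-m) * (m:ℝ)^n)]
      simp only [Finset.card_univ, Fintype.card_fin, nsmul_eq_mul]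
      have h2 := (Sal_main n).2
      unfold Sal at h2
      rw [← h2]
      exact Finset.sum_congr rfl fun k hk => by ring
    rw [← hfull, ← Finset.sum_filter_add_sum_filter_not
      (Finset.univ : Finset (Fin n)).powerset (fun I : Finset (Fin n) => I.Nonempty)]
    have hz : ∑ I ∈ ((Finset.univ : Finset (Fin n)).powerset.filter
        fun I : Finset (Fin n) => ¬ I.Nonempty),
        (-1:ℝ)^(n - I.card) * (I.card:ℝ)^n = 0 := by
      refine Finset.sum_eq_zero fun I hI => ?_
      have hIe : I = ∅ := Finset.not_nonempty_iff_eq_empty.mp (Finset.mem_filter.mp hI).2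
      subst hIe
      simp [zero_pow (by omega : n ≠ 0)]
    rw [hz, add_zero]
  rw [MV, Finset.sum_congr rfl hterm, ← Finset.sum_mul, hS]
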